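/- Let g : ℝᵖ → ℝ be locally Lipschitz and suppose g is subdifferentially regular on an open set O ⊆ ℝᵖ, and let γ : [0,1] → ℝᵖ be an absolutely continuous curve with γ([0,1]) ⊆ O. Then g satisfies the chain rule along γ: for almost every t ∈ [0,1], the composition g ∘ γ is differentiable at t and (g ∘ γ)'(t) = ⟨v, γ'(t)⟩ for every v ∈ ∂°g(γ(t)), where ∂° is the Clarke subdifferential. -/

import Mathlib

open Filter Set MeasureTheory

variable {p : ℕ}

/-- Absolute continuity of a curve on `[0,1]`. -/
def AbsCont {E : Type*} [NormedAddCommGroup E] [NormedSpace ℝ E] (γ : ℝ → E) : Prop :=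
  (∀ᵐ t ∂(volume.restrict (Icc (0:ℝ) 1)), DifferentiableAt ℝ γ t) ∧
  IntegrableOn (deriv γ) (Icc (0:ℝ) 1) volume ∧
  ∀ t ∈ Icc (0:ℝ) 1, γ t - γ 0 = ∫ s in (0:ℝ)..t, deriv γ s

/-- Clarke generalized directional derivative
`g°(x;d) = limsup_{y → x, t ↓ 0} (g(y + t d) - g(y))/t`. -/
noncomputable def clarkeDir (g : EuclideanSpace ℝ (Fin p) → ℝ)
    (x d : EuclideanSpace ℝ (Fin p)) : ℝ :=
  Filter.limsup (fun q : EuclideanSpace ℝ (Fin p) × ℝ => (g (q.1 + q.2 • d) - g q.1) / q.2)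
    ((nhds x) ×ˢ (nhdsWithin 0 (Ioi 0)))

/-- Lower Dini directional derivative. -/
noncomputable def diniLower (g : EuclideanSpace ℝ (Fin p) → ℝ)
    (x d : EuclideanSpace ℝ (Fin p)) : ℝ :=
  Filter.liminf (fun t : ℝ => (g (x + t • d) - g x) / t) (nhdsWithin 0 (Ioi 0))

/-- Clarke subdifferential: convex hull of limits of gradients at nearby points. -/
def clarke (g : EuclideanSpace ℝ (Fin p) → ℝ) (z : EuclideanSpace ℝ (Fin p)) :
    Set (EuclideanSpace ℝ (Fin p)) :=
  convexHull ℝ {v | ∃ zk gk : ℕ → EuclideanSpace ℝ (Fin p),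
    (∀ k, HasGradientAt g (gk k) (zk k)) ∧
    Tendsto zk atTop (nhds z) ∧ Tendsto gk atTop (nhds v)}

section Aux
open InnerProductSpace
local notation "E" => EuclideanSpace ℝ (Fin p)

lemma grad_dir {g : E → ℝ} {G z d : E} (h : HasGradientAt g G z) :
    Tendsto (fun s : ℝ => (g (z + s • d) - g z) / s) (nhdsWithin (0:ℝ) {0}ᶜ)
      (nhds (inner ℝ G d : ℝ)) := by
  have hl : HasDerivAt (fun s : ℝ => z + s • d) d 0 := by
    simpa using ((hasDerivAt_id (0:ℝ)).smul_const d).const_add z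
  have hc : HasDerivAt (fun s : ℝ => g (z + s • d)) (inner ℝ G d : ℝ) 0 := by
    exact (by simpa using h.hasFDerivAt : HasFDerivAt g ((toDual ℝ (EuclideanSpace ℝ (Fin p))) G) ((fun s:ℝ => z + s • d) 0)).comp_hasDerivAt 0 hl
  have := hasDerivAt_iff_tendsto_slope.1 hc
  refine this.congr fun s => ?_
  simp [slope_def_field]

lemma eventual_bound {g : E → ℝ} {K : NNReal} {U : Set E} {x d : E}
    (hL : LipschitzOnWith K g U) (hU : U ∈ nhds x) :
    ∀ᶠ q in (nhds x ×ˢ nhdsWithin (0:ℝ) (Ioi 0)),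
      (g (q.1 + q.2 • d) - g q.1) / q.2 ≤ K * ‖d‖ := by
  obtain ⟨ε, hε, hball⟩ := Metric.mem_nhds_iff.1 hU
  have h1 : ∀ᶠ y in nhds x, y ∈ Metric.ball x (ε/2) :=
    Metric.ball_mem_nhds x (by linarith)
  have hτ : 0 < ε/(2*(‖d‖+1)) := by positivity
  have h2 : ∀ᶠ s in nhdsWithin (0:ℝ) (Ioi 0), s ∈ Ioo (0:ℝ) (ε/(2*(‖d‖+1))) :=
    Ioo_mem_nhdsGT_of_mem ⟨le_refl _, hτ⟩
  filter_upwards [h1.prod_mk h2] with q hq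
  obtain ⟨hy, hs0, hsτ⟩ : q.1 ∈ Metric.ball x (ε/2) ∧ 0 < q.2 ∧ q.2 < ε/(2*(‖d‖+1)) :=
    ⟨hq.1, hq.2.1, hq.2.2⟩
  have hnd : ‖q.2 • d‖ < ε/2 := by
    rw [norm_smul, Real.norm_eq_abs, abs_of_pos hs0]
    calc q.2 * ‖d‖ ≤ q.2 * (‖d‖+1) := by nlinarith [norm_nonneg d]
    _ < ε/(2*(‖d‖+1)) * (‖d‖+1) := by
        apply mul_lt_mul_of_pos_right hsτ; positivity
    _ = ε/2 := by field_simp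
  have hmem1 : q.1 ∈ U := hball (by
    rw [Metric.mem_ball] at hy ⊢; linarith)
  have hmem2 : q.1 + q.2 • d ∈ U := hball (by
    rw [Metric.mem_ball, dist_eq_norm] at hy ⊢
    calc ‖q.1 + q.2 • d - x‖ ≤ ‖q.1 - x‖ + ‖q.2 • d‖ := by
          have : q.1 + q.2 • d - x = (q.1 - x) + q.2 • d := by abel
          rw [this]; exact norm_add_le _ _
    _ < ε/2 + ε/2 := by exact add_lt_add hy hnd
    _ = ε := by ring)
  have hdist' : dist (g (q.1 + q.2 • d)) (g q.1) ≤ K * dist (q.1 + q.2 • d) q.1 :=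
    hL.dist_le_mul _ hmem2 _ hmem1
  have hd2 : dist (q.1 + q.2 • d) q.1 = q.2 * ‖d‖ := by
    rw [dist_eq_norm]
    simp [norm_smul, Real.norm_eq_abs, abs_of_pos hs0]
  rw [hd2] at hdist'
  rw [div_le_iff₀ hs0]
  calc g (q.1 + q.2 • d) - g q.1 ≤ |g (q.1 + q.2 • d) - g q.1| := le_abs_self _
  _ = dist (g (q.1 + q.2 • d)) (g q.1) := (Real.dist_eq _ _).symm
  _ ≤ K * (q.2 * ‖d‖) := hdist'
  _ = K * ‖d‖ * q.2 := by ring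

lemma support_bound {g : E → ℝ} (hg : LocallyLipschitz g) {x d v : E}
    (hv : v ∈ clarke g x) : (inner ℝ v d : ℝ) ≤ clarkeDir g x d := by
  obtain ⟨K, U, hU, hL⟩ := hg x
  have hbdd := eventual_bound (d := d) hL hU
  have hne : {a : ℝ | ∀ᶠ q in (nhds x ×ˢ nhdsWithin (0:ℝ) (Ioi 0)),
      (g (q.1 + q.2 • d) - g q.1) / q.2 ≤ a}.Nonempty := ⟨_, hbdd⟩
  have hsub : {v : E | ∃ zk gk : ℕ → E,
      (∀ k, HasGradientAt g (gk k) (zk k)) ∧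
      Tendsto zk atTop (nhds x) ∧ Tendsto gk atTop (nhds v)} ⊆
      {v : E | (inner ℝ v d : ℝ) ≤ clarkeDir g x d} := by
    rintro w ⟨zk, gk, hgrad, hz, hG⟩
    rw [clarkeDir, Filter.limsup_eq]
    apply le_csInf hne
    intro b hb
    obtain ⟨U', hU', V', hV', hsub'⟩ := Filter.mem_prod_iff.1 hb
    have hk : ∀ᶠ k in atTop, zk k ∈ U' := hz.eventually_mem hU'
    have key : ∀ᶠ k in atTop, (inner ℝ (gk k) d : ℝ) ≤ b := by
      filter_upwards [hk] with k hkU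
      have hten := (grad_dir (d := d) (hgrad k)).mono_left
        (nhdsWithin_mono 0 (fun s hs => ne_of_gt hs : Ioi (0:ℝ) ⊆ {0}ᶜ))
      refine le_of_tendsto hten ?_
      filter_upwards [hV'] with s hsV
      exact hsub' (Set.mk_mem_prod hkU hsV)
    have hlim : Tendsto (fun k => (inner ℝ (gk k) d : ℝ)) atTop (nhds (inner ℝ w d : ℝ)) :=
      hG.inner tendsto_const_nhds
    exact le_of_tendsto hlim key
  exact convexHull_min hsub (convex_halfSpace_le
    ⟨fun a b => inner_add_left a b d, fun c a => real_inner_smul_left a d c⟩ _) hv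

lemma line_quotient {g : E → ℝ} {γ : ℝ → E} {t D : ℝ} {d : E} {K : NNReal} {U : Set E}
    (hL : LipschitzOnWith K g U) (hU : U ∈ nhds (γ t))
    (hγd : HasDerivAt γ d t) (hD : HasDerivAt (fun s => g (γ s)) D t) :
    Tendsto (fun s : ℝ => (g (γ t + s • d) - g (γ t)) / s)
      (nhdsWithin (0:ℝ) {0}ᶜ) (nhds D) := by
  have hshift : Tendsto (fun s : ℝ => t + s) (nhdsWithin (0:ℝ) {0}ᶜ)
      (nhdsWithin t {t}ᶜ) := by
    rw [tendsto_nhdsWithin_iff]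
    constructor
    · have : Tendsto (fun s : ℝ => t + s) (nhds 0) (nhds t) := by
        simpa using (continuous_add_left t).tendsto (0:ℝ)
      exact this.mono_left nhdsWithin_le_nhds
    · filter_upwards [self_mem_nhdsWithin] with s hs
      simp only [mem_compl_iff, mem_singleton_iff] at hs ⊢
      intro h; exact hs (by linarith)
  have hf : Tendsto (fun s : ℝ => (g (γ (t + s)) - g (γ t)) / s)
      (nhdsWithin (0:ℝ) {0}ᶜ) (nhds D) := by
    have := (hasDerivAt_iff_tendsto_slope.1 hD).comp hshift
    refine this.congr fun s => ?_
    simp [Function.comp, slope_def_field]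
  have herr : Tendsto (fun s : ℝ => (K:ℝ) * (‖s‖⁻¹ * ‖γ (t + s) - γ t - s • d‖))
      (nhdsWithin (0:ℝ) {0}ᶜ) (nhds 0) := by
    have h1 := hasDerivAt_iff_tendsto.1 hγd
    have h2 : Tendsto (fun s : ℝ => t + s) (nhds (0:ℝ)) (nhds t) := by
      simpa using (continuous_add_left t).tendsto (0:ℝ)
    have h3 := (h1.comp h2).mono_left (nhdsWithin_le_nhds (s := {(0:ℝ)}ᶜ))
    have h4 : Tendsto (fun s : ℝ => ‖s‖⁻¹ * ‖γ (t + s) - γ t - s • d‖)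
        (nhdsWithin (0:ℝ) {0}ᶜ) (nhds 0) := by
      refine h3.congr fun s => ?_
      simp [Function.comp]
    simpa using h4.const_mul (K:ℝ)
  have he : Tendsto (fun s : ℝ => (g (γ t + s • d) - g (γ (t + s))) / s)
      (nhdsWithin (0:ℝ) {0}ᶜ) (nhds 0) := by
    apply squeeze_zero_norm' _ herr
    have hcont : ContinuousAt γ t := hγd.continuousAt
    have hU1 : ∀ᶠ s : ℝ in nhds 0, γ (t + s) ∈ U := by
      have : Tendsto (fun s : ℝ => γ (t + s)) (nhds 0) (nhds (γ t)) := by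
        apply hcont.tendsto.comp
        simpa using (continuous_add_left t).tendsto (0:ℝ)
      exact this.eventually_mem hU
    have hU2 : ∀ᶠ s : ℝ in nhds 0, γ t + s • d ∈ U := by
      have : Tendsto (fun s : ℝ => γ t + s • d) (nhds 0) (nhds (γ t)) := by
        have hc2 : Continuous fun s : ℝ => γ t + s • d := by fun_prop
        simpa using hc2.tendsto (0:ℝ)
      exact this.eventually_mem hU
    filter_upwards [nhdsWithin_le_nhds hU1, nhdsWithin_le_nhds hU2,
      self_mem_nhdsWithin] with s h1 h2 hs
    have hspos : (0:ℝ) < ‖s‖ := norm_pos_iff.2 hs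
    have hnum : ‖g (γ t + s • d) - g (γ (t + s))‖ ≤ K * ‖γ (t + s) - γ t - s • d‖ := by
      have hd := hL.dist_le_mul _ h2 _ h1
      rw [Real.dist_eq, dist_eq_norm] at hd
      have heq : ‖γ t + s • d - γ (t + s)‖ = ‖γ (t + s) - γ t - s • d‖ := by
        rw [← norm_neg]; congr 1; abel
      rw [heq] at hd
      exact hd
    rw [norm_div]
    calc ‖g (γ t + s • d) - g (γ (t + s))‖ / ‖s‖
        ≤ ((K:ℝ) * ‖γ (t + s) - γ t - s • d‖) / ‖s‖ := by gcongr
    _ = (K:ℝ) * (‖s‖⁻¹ * ‖γ (t + s) - γ t - s • d‖) := by field_simp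
  have := he.add hf
  rw [zero_add] at this
  refine this.congr fun s => ?_
  rw [← add_div]
  ring_nf

lemma comp_ae_diff {g : E → ℝ} (hg : LocallyLipschitz g) {γ : ℝ → E}
    (hint : IntegrableOn (deriv γ) (Icc (0:ℝ) 1) volume)
    (hFTC : ∀ t ∈ Icc (0:ℝ) 1, γ t - γ 0 = ∫ s in (0:ℝ)..t, deriv γ s) :
    ∀ᵐ t : ℝ, t ∈ Ioo (0:ℝ) 1 → DifferentiableAt ℝ (fun s => g (γ s)) t := by
  -- continuity of γ on Icc 0 1
  have huIcc : uIcc (0:ℝ) 1 = Icc 0 1 := uIcc_of_le zero_le_one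
  have hprim : ContinuousOn (fun t => ∫ s in (0:ℝ)..t, deriv γ s) (Icc (0:ℝ) 1) := by
    have := intervalIntegral.continuousOn_primitive_interval
      (a := (0:ℝ)) (b := 1) (μ := volume) (f := deriv γ) (by rw [huIcc]; exact hint)
    rwa [huIcc] at this
  have hcontγ : ContinuousOn γ (Icc (0:ℝ) 1) := by
    have : ContinuousOn (fun t => γ 0 + ∫ s in (0:ℝ)..t, deriv γ s) (Icc (0:ℝ) 1) :=
      continuousOn_const.add hprim
    refine this.congr fun t ht => ?_
    have := hFTC t ht
    beta_reduce; rw [← this]; abel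
  have hKcomp : IsCompact (γ '' Icc (0:ℝ) 1) := isCompact_Icc.image_of_continuousOn hcontγ
  -- uniform local Lipschitz constant near the image
  have hloc : ∀ x : E, ∃ r > (0:ℝ), ∃ Lx : NNReal, LipschitzOnWith Lx g (Metric.ball x r) := by
    intro x
    obtain ⟨Kx, U, hU, hL⟩ := hg x
    obtain ⟨r, hr, hball⟩ := Metric.mem_nhds_iff.1 hU
    exact ⟨r, hr, Kx, hL.mono hball⟩
  choose r hr Lf hLf using hloc
  obtain ⟨S, hSK, hScov⟩ := hKcomp.elim_nhds_subcover (fun x => Metric.ball x (r x / 2))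
    (fun x _ => Metric.ball_mem_nhds x (by linarith [hr x]))
  have hKne : (γ '' Icc (0:ℝ) 1).Nonempty := ⟨γ 0, 0, by simp, rfl⟩
  have hSne : S.Nonempty := by
    rcases hKne with ⟨a, ha⟩
    have := hScov ha
    simp only [Set.mem_iUnion] at this
    obtain ⟨x, hx, -⟩ := this
    exact ⟨x, hx⟩
  set ε : ℝ := S.inf' hSne (fun x => r x / 2) with hε_def
  set L : ℝ := S.sup' hSne (fun x => (Lf x : ℝ)) with hL_def
  have hεpos : 0 < ε := by
    apply Finset.lt_inf'_iff (α := ℝ) hSne (f := fun x => r x / 2) (a := (0:ℝ)) |>.2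
    intro x _; linarith [hr x]
  have hLnn : 0 ≤ L := by
    rcases hSne with ⟨x, hx⟩
    exact le_trans (Lf x).2 (Finset.le_sup' (fun x => (Lf x : ℝ)) hx)
  have hLip : ∀ a ∈ γ '' Icc (0:ℝ) 1, ∀ b : E, dist b a < ε → ‖g b - g a‖ ≤ L * ‖b - a‖ := by
    intro a ha b hba
    have := hScov ha
    simp only [Set.mem_iUnion] at this
    obtain ⟨x, hxS, hax⟩ := this
    have hεx : ε ≤ r x / 2 := Finset.inf'_le _ hxS
    have hax' : dist a x < r x / 2 := hax
    have haball : a ∈ Metric.ball x (r x) := by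
      rw [Metric.mem_ball]; linarith [hr x]
    have hbball : b ∈ Metric.ball x (r x) := by
      rw [Metric.mem_ball]
      calc dist b x ≤ dist b a + dist a x := dist_triangle _ _ _
      _ < ε + r x / 2 := by linarith
      _ ≤ r x := by linarith
    have hd := (hLf x).dist_le_mul _ hbball _ haball
    rw [Real.dist_eq, dist_eq_norm] at hd
    calc ‖g b - g a‖ = |g b - g a| := rfl
    _ ≤ (Lf x : ℝ) * ‖b - a‖ := hd
    _ ≤ L * ‖b - a‖ := by
        apply mul_le_mul_of_nonneg_right (Finset.le_sup' (fun x => (Lf x : ℝ)) hxS)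
          (norm_nonneg _)
  -- uniform continuity of γ
  obtain ⟨δ, hδpos, hδ⟩ := Metric.uniformContinuousOn_iff.1
    (isCompact_Icc.uniformContinuousOn_of_continuous hcontγ) ε hεpos
  -- the monotone majorant m
  set m : ℝ → ℝ := fun t => ∫ s in (0:ℝ)..t, L * ‖deriv γ s‖ with hm_def
  have hintLn : IntegrableOn (fun s => L * ‖deriv γ s‖) (Icc (0:ℝ) 1) volume :=
    hint.norm.const_mul L
  have hII : ∀ a b : ℝ, 0 ≤ a → a ≤ b → b ≤ 1 →
      IntervalIntegrable (fun s => L * ‖deriv γ s‖) volume a b := by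
    intro a b h0 hab h1
    apply IntegrableOn.intervalIntegrable
    rw [uIcc_of_le hab]
    exact hintLn.mono_set (Icc_subset_Icc h0 h1)
  have hIIγ : ∀ a b : ℝ, 0 ≤ a → a ≤ b → b ≤ 1 →
      IntervalIntegrable (deriv γ) volume a b := by
    intro a b h0 hab h1
    apply IntegrableOn.intervalIntegrable
    rw [uIcc_of_le hab]
    exact hint.mono_set (Icc_subset_Icc h0 h1)
  have hmdiff : ∀ a b : ℝ, 0 ≤ a → a ≤ b → b ≤ 1 →
      m b - m a = ∫ s in a..b, L * ‖deriv γ s‖ := by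
    intro a b h0 hab h1
    exact intervalIntegral.integral_interval_sub_left
      (hII 0 b le_rfl (h0.trans hab) h1) (hII 0 a le_rfl h0 (hab.trans h1))
  have hγdiff : ∀ a b : ℝ, 0 ≤ a → a ≤ b → b ≤ 1 →
      γ b - γ a = ∫ s in a..b, deriv γ s := by
    intro a b h0 hab h1
    have h1' := hFTC b ⟨h0.trans hab, h1⟩
    have h2' := hFTC a ⟨h0, hab.trans h1⟩
    have := intervalIntegral.integral_interval_sub_left
      (hIIγ 0 b le_rfl (h0.trans hab) h1) (hIIγ 0 a le_rfl h0 (hab.trans h1))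
    rw [← h1', ← h2'] at this
    rw [← this]; abel
  -- local inequality
  have hlocal : ∀ a b : ℝ, a ∈ Icc (0:ℝ) 1 → b ∈ Icc (0:ℝ) 1 → a ≤ b → b - a < δ →
      ‖g (γ b) - g (γ a)‖ ≤ m b - m a := by
    intro a b ha hb hab hsmall
    have hdist : dist (γ b) (γ a) < ε := by
      apply hδ b hb a ha
      rw [Real.dist_eq, abs_of_nonneg (by linarith)]
      exact hsmall
    have hga : γ a ∈ γ '' Icc (0:ℝ) 1 := mem_image_of_mem γ ha
    have h1 := hLip (γ a) hga (γ b) hdist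
    have h2 : ‖γ b - γ a‖ ≤ ∫ s in a..b, ‖deriv γ s‖ := by
      rw [hγdiff a b ha.1 hab hb.2]
      exact intervalIntegral.norm_integral_le_integral_norm hab
    calc ‖g (γ b) - g (γ a)‖ ≤ L * ‖γ b - γ a‖ := h1
    _ ≤ L * ∫ s in a..b, ‖deriv γ s‖ := mul_le_mul_of_nonneg_left h2 hLnn
    _ = ∫ s in a..b, L * ‖deriv γ s‖ := by
        rw [← intervalIntegral.integral_const_mul]
    _ = m b - m a := (hmdiff a b ha.1 hab hb.2).symm
  -- chaining
  have hchain : ∀ n : ℕ, ∀ a b : ℝ, a ∈ Icc (0:ℝ) 1 → b ∈ Icc (0:ℝ) 1 → a ≤ b →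
      b - a ≤ n * (δ/2) → ‖g (γ b) - g (γ a)‖ ≤ m b - m a := by
    intro n
    induction n with
    | zero =>
      intro a b _ _ hab hle
      simp only [Nat.cast_zero, zero_mul] at hle
      have : a = b := le_antisymm hab (by linarith)
      subst this
      simp
    | succ n ih =>
      intro a b ha hb hab hle
      set c : ℝ := max a (b - δ/2) with hc_def
      have hac : a ≤ c := le_max_left _ _
      have hcb : c ≤ b := max_le hab (by linarith)
      have hc : c ∈ Icc (0:ℝ) 1 := ⟨ha.1.trans hac, hcb.trans hb.2⟩
      have hbc : b - c ≤ δ/2 := by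
        have : b - δ/2 ≤ c := le_max_right _ _
        linarith
      have hca : c - a ≤ n * (δ/2) := by
        rcases le_or_gt (b - δ/2) a with h | h
        · have : c = a := max_eq_left h
          rw [this]; simp; positivity
        · have : c = b - δ/2 := max_eq_right h.le
          rw [this]
          push_cast at hle ⊢
          linarith
      have step1 := ih a c ha hc hac hca
      have step2 := hlocal c b hc hb hcb (by linarith)
      calc ‖g (γ b) - g (γ a)‖ ≤ ‖g (γ b) - g (γ c)‖ + ‖g (γ c) - g (γ a)‖ := by
            have : g (γ b) - g (γ a) = (g (γ b) - g (γ c)) + (g (γ c) - g (γ a)) := by ring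
            rw [this]; exact norm_add_le _ _
      _ ≤ (m b - m c) + (m c - m a) := add_le_add step2 step1
      _ = m b - m a := by ring
  have hglobal : ∀ a b : ℝ, a ∈ Icc (0:ℝ) 1 → b ∈ Icc (0:ℝ) 1 → a ≤ b →
      ‖g (γ b) - g (γ a)‖ ≤ m b - m a := by
    intro a b ha hb hab
    obtain ⟨n, hn⟩ := exists_nat_ge (1 / (δ/2))
    refine hchain n a b ha hb hab ?_
    have h2 : (1:ℝ) ≤ n * (δ/2) := by
      rw [div_le_iff₀ (by positivity : (0:ℝ) < δ/2)] at hn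
      linarith
    have : b - a ≤ 1 := by
      rcases ha with ⟨ha0, _⟩; rcases hb with ⟨_, hb1⟩; linarith
    linarith
  -- monotone extension and a.e. differentiability
  set proj : ℝ → ℝ := fun t => max 0 (min t 1) with hproj_def
  have hprojmem : ∀ t, proj t ∈ Icc (0:ℝ) 1 :=
    fun t => ⟨le_max_left _ _, max_le zero_le_one (min_le_right _ _)⟩
  have hprojmono : Monotone proj :=
    fun a b hab => max_le_max le_rfl (min_le_min (le_of_eq rfl) le_rfl |>.trans
      (min_le_min hab le_rfl))
  set F : ℝ → ℝ := fun t => m (proj t) - g (γ (proj t)) with hF_def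
  set G : ℝ → ℝ := fun t => m (proj t) + g (γ (proj t)) with hG_def
  have hkey : ∀ a b : ℝ, a ≤ b →
      ‖g (γ (proj b)) - g (γ (proj a))‖ ≤ m (proj b) - m (proj a) :=
    fun a b hab => hglobal _ _ (hprojmem a) (hprojmem b) (hprojmono hab)
  have hFmono : Monotone F := by
    intro a b hab
    have h := hkey a b hab
    have := neg_abs_le (g (γ (proj b)) - g (γ (proj a)))
    simp only [F]
    rw [Real.norm_eq_abs] at h
    have h2 := le_abs_self (g (γ (proj b)) - g (γ (proj a)))
    linarith
  have hGmono : Monotone G := by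
    intro a b hab
    have h := hkey a b hab
    rw [Real.norm_eq_abs] at h
    have h2 := neg_abs_le (g (γ (proj b)) - g (γ (proj a)))
    simp only [G]
    linarith
  filter_upwards [hFmono.ae_differentiableAt, hGmono.ae_differentiableAt] with t hFt hGt
  intro ht
  have hdiff : DifferentiableAt ℝ (fun s => g (γ (proj s))) t := by
    have : (fun s => g (γ (proj s))) = fun s => (G s - F s) / 2 := by
      funext s; simp only [F, G]; ring
    rw [this]
    exact (hGt.sub hFt).div_const 2
  refine hdiff.congr_of_eventuallyEq ?_
  have hIoo : Ioo (0:ℝ) 1 ∈ nhds t := isOpen_Ioo.mem_nhds ht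
  filter_upwards [hIoo] with s hs
  have : proj s = s := by
    simp only [proj]
    rw [min_eq_left hs.2.le, max_eq_right hs.1.le]
  rw [this]

end Aux

theorem stmt17 (p : ℕ) (g : EuclideanSpace ℝ (Fin p) → ℝ) (hg : LocallyLipschitz g)
    (O : Set (EuclideanSpace ℝ (Fin p))) (hO : IsOpen O)
    (hreg : ∀ x ∈ O, ∀ d : EuclideanSpace ℝ (Fin p), clarkeDir g x d = diniLower g x d)
    (γ : ℝ → EuclideanSpace ℝ (Fin p)) (hγ : AbsCont γ)
    (hγO : ∀ t ∈ Icc (0:ℝ) 1, γ t ∈ O) :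
    ∀ᵐ t ∂(volume.restrict (Icc (0:ℝ) 1)), ∀ v ∈ clarke g (γ t),
      HasDerivAt (fun s => g (γ s)) (inner ℝ v (deriv γ t) : ℝ) t := by
  have h2 : ∀ᵐ t ∂(volume.restrict (Icc (0:ℝ) 1)),
      t ∈ Ioo (0:ℝ) 1 → DifferentiableAt ℝ (fun s => g (γ s)) t :=
    ae_restrict_of_ae (comp_ae_diff hg hγ.2.1 hγ.2.2)
  have h3 : ∀ᵐ t ∂(volume.restrict (Icc (0:ℝ) 1)), t ∈ Icc (0:ℝ) 1 :=
    ae_restrict_mem measurableSet_Icc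
  have h4 : ∀ᵐ t ∂(volume.restrict (Icc (0:ℝ) 1)), t ≠ 0 ∧ t ≠ 1 := by
    apply ae_restrict_of_ae
    have h0 : ∀ᵐ t : ℝ, t ≠ (0:ℝ) := by
      rw [ae_iff]
      simpa using measure_singleton (0:ℝ)
    have h1 : ∀ᵐ t : ℝ, t ≠ (1:ℝ) := by
      rw [ae_iff]
      simpa using measure_singleton (1:ℝ)
    exact h0.and h1
  filter_upwards [hγ.1, h2, h3, h4] with t hdγ hdcomp htIcc hne01
  intro v hv
  have htIoo : t ∈ Ioo (0:ℝ) 1 :=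
    ⟨lt_of_le_of_ne htIcc.1 (Ne.symm hne01.1), lt_of_le_of_ne htIcc.2 hne01.2⟩
  have hxO : γ t ∈ O := hγO t htIcc
  have hγd : HasDerivAt γ (deriv γ t) t := hdγ.hasDerivAt
  have hdc := hdcomp htIoo
  have hD : HasDerivAt (fun s => g (γ s)) (deriv (fun s => g (γ s)) t) t := hdc.hasDerivAt
  set d := deriv γ t with hd_def
  set D := deriv (fun s => g (γ s)) t with hD_def
  obtain ⟨K, U, hU, hL⟩ := hg (γ t)
  have hline := line_quotient hL hU hγd hD
  have hsub : Ioi (0:ℝ) ⊆ {(0:ℝ)}ᶜ := fun s hs => ne_of_gt hs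
  have hdin1 : diniLower g (γ t) d = D :=
    Tendsto.liminf_eq (hline.mono_left (nhdsWithin_mono 0 hsub))
  have hmapneg : Tendsto (fun s : ℝ => -s) (nhdsWithin (0:ℝ) (Ioi 0))
      (nhdsWithin (0:ℝ) {0}ᶜ) := by
    rw [tendsto_nhdsWithin_iff]
    refine ⟨by simpa using (continuous_neg.tendsto (0:ℝ)).mono_left nhdsWithin_le_nhds, ?_⟩
    filter_upwards [self_mem_nhdsWithin] with s hs
    simp only [mem_compl_iff, mem_singleton_iff, neg_eq_zero]
    exact ne_of_gt hs
  have hneg : Tendsto (fun s : ℝ => (g (γ t + s • (-d)) - g (γ t)) / s)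
      (nhdsWithin (0:ℝ) (Ioi 0)) (nhds (-D)) := by
    have := (hline.comp hmapneg).neg
    refine this.congr fun s => ?_
    simp only [Function.comp]
    have h1 : (-s) • d = s • (-d) := by module
    rw [h1, div_neg, neg_neg]
  have hdin2 : diniLower g (γ t) (-d) = -D := Tendsto.liminf_eq hneg
  have hb1 : (inner ℝ v d : ℝ) ≤ D := by
    have := support_bound hg hv (d := d)
    rwa [hreg _ hxO, hdin1] at this
  have hb2 : (inner ℝ v (-d) : ℝ) ≤ -D := by
    have := support_bound hg hv (d := -d)
    rwa [hreg _ hxO, hdin2] at this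
  rw [inner_neg_right] at hb2
  have hvd : (inner ℝ v d : ℝ) = D := le_antisymm hb1 (by linarith)
  rw [hvd]
  exact hD
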